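/- The two iterated limits of λ(k,θ) at (k,θ) = (0,0) differ: lim_{k→0} lim_{θ→0} λ(k,θ) = 1 while lim_{θ→0} lim_{k→0} λ(k,θ) = -1 (for t ∈ (0,1), d > 0), hence λ is not continuous at (0,0). -/

import Mathlib

open Complex Filter Topology

/-- the two iterated limits of `λ(k,θ)` at `(0,0)` differ:
`lim_{k→0} lim_{θ→0} λ(k,θ) = 1` while `lim_{θ→0} lim_{k→0} λ(k,θ) = -1`;
hence `λ` is not continuous at `(0,0)`. -/
theorem stmt10 (t d : ℝ) (ht : t ∈ Set.Ioo (0:ℝ) 1) (hd : 0 < d)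
    (lam : ℝ → ℝ → ℂ)
    (hlam : ∀ k θ : ℝ, lam k θ =
      -(((t:ℂ) * ((Real.cos θ : ℝ) - Real.cos (k*d)) + Complex.I * ((t:ℂ)-1) * (Real.sin (k*d) : ℝ)) /
        ((t:ℂ) * ((Real.cos θ : ℝ) - Real.cos (k*d)) - Complex.I * ((t:ℂ)-1) * (Real.sin (k*d) : ℝ)))) :
    (∃ L : ℝ → ℂ,
      (∀ k : ℝ, k ≠ 0 → Tendsto (fun θ : ℝ => lam k θ)
        (nhdsWithin 0 {θ : ℝ | Real.cos θ ≠ 1}) (nhds (L k))) ∧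
      Tendsto L (nhdsWithin 0 {k : ℝ | k ≠ 0}) (nhds 1)) ∧
    (∃ M : ℝ → ℂ,
      (∀ θ : ℝ, Real.cos θ ≠ 1 → Tendsto (fun k : ℝ => lam k θ)
        (nhdsWithin 0 {k : ℝ | k ≠ 0}) (nhds (M θ))) ∧
      Tendsto M (nhdsWithin 0 {θ : ℝ | Real.cos θ ≠ 1}) (nhds (-1))) ∧
    ¬ ContinuousAt (fun p : ℝ × ℝ => lam p.1 p.2) (0, 0) := by
  obtain ⟨ht0, ht1⟩ := ht
  have htne : (t:ℂ) ≠ 0 := by exact_mod_cast ht0.ne'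
  have ht1c : (t:ℂ) - 1 ≠ 0 := by
    intro h
    have : (t:ℂ) = 1 := by linear_combination h
    exact ht1.ne (by exact_mod_cast this)
  set c : ℂ := Complex.I * ((t:ℂ) - 1) with hc
  have hcne : c ≠ 0 := mul_ne_zero Complex.I_ne_zero ht1c
  -- denominators of the form t*x - c*y (x,y real) are nonzero when t*x ≠ 0
  have hden : ∀ x y : ℝ, t * x ≠ 0 → (t:ℂ) * (x:ℂ) - c * (y:ℂ) ≠ 0 := by
    intro x y hx h
    have hre := congrArg Complex.re h
    simp [hc, Complex.mul_re, Complex.sub_re] at hre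
    exact hx (mul_eq_zero.mpr hre)
  -- value of lam along the k = 0 axis
  have hval0 : ∀ θ : ℝ, Real.cos θ ≠ 1 → lam 0 θ = -1 := by
    intro θ hθ
    have hx : t * (Real.cos θ - 1) ≠ 0 :=
      mul_ne_zero ht0.ne' (sub_ne_zero.mpr hθ)
    have hz : (t:ℂ) * ((Real.cos θ : ℂ) - 1) ≠ 0 := by
      intro h; apply hx; exact_mod_cast h
    rw [hlam]
    simp only [zero_mul, Real.sin_zero, Real.cos_zero, Complex.ofReal_zero, mul_zero,
      Complex.ofReal_one, add_zero, sub_zero]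
    rw [div_self hz]
  refine ⟨⟨fun k => if Real.cos (k*d) = 1 then -1 else
      -(((t:ℂ) * ((1:ℂ) - (Real.cos (k*d):ℂ)) + c * (Real.sin (k*d):ℂ)) /
        ((t:ℂ) * ((1:ℂ) - (Real.cos (k*d):ℂ)) - c * (Real.sin (k*d):ℂ))), ?_, ?_⟩,
    ⟨fun _ => -1, ?_, tendsto_const_nhds⟩, ?_⟩
  · -- inner limit in θ for fixed k ≠ 0
    intro k hk
    by_cases hck : Real.cos (k*d) = 1
    · -- degenerate case: cos(kd)=1, sin(kd)=0, λ ≡ -1 on the set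
      have hsk : Real.sin (k*d) = 0 := by
        nlinarith [Real.sin_sq_add_cos_sq (k*d), sq_nonneg (Real.sin (k*d))]
      beta_reduce
      rw [if_pos hck]
      apply Tendsto.congr' _ (tendsto_const_nhds (α := ℝ) (f := nhdsWithin 0 {θ : ℝ | Real.cos θ ≠ 1}))
      filter_upwards [eventually_mem_nhdsWithin] with θ hθ
      have hθ' : Real.cos θ ≠ 1 := hθ
      have hz : (t:ℂ) * ((Real.cos θ : ℂ) - 1) ≠ 0 := by
        intro h
        apply mul_ne_zero ht0.ne' (sub_ne_zero.mpr hθ')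
        exact_mod_cast h
      rw [hlam, hck, hsk]
      simp only [Complex.ofReal_zero, mul_zero, Complex.ofReal_one, add_zero, sub_zero]
      rw [div_self hz]
    · beta_reduce
      rw [if_neg hck]
      have hclt : Real.cos (k*d) < 1 := lt_of_le_of_ne (Real.cos_le_one _) hck
      have hD : (t:ℂ) * ((1:ℂ) - (Real.cos (k*d):ℂ)) - c * (Real.sin (k*d):ℂ) ≠ 0 := by
        have := hden (1 - Real.cos (k*d)) (Real.sin (k*d))
          (mul_ne_zero ht0.ne' (by linarith))
        push_cast at this ⊢
        exact this
      have hcont : ContinuousAt (fun θ : ℝ =>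
          -(((t:ℂ) * ((Real.cos θ : ℂ) - (Real.cos (k*d):ℂ)) + c * (Real.sin (k*d):ℂ)) /
            ((t:ℂ) * ((Real.cos θ : ℂ) - (Real.cos (k*d):ℂ)) - c * (Real.sin (k*d):ℂ)))) 0 := by
        apply ContinuousAt.neg
        apply ContinuousAt.div
        · fun_prop
        · fun_prop
        · simpa [Real.cos_zero] using hD
      have := hcont.tendsto.mono_left (nhdsWithin_le_nhds (s := {θ : ℝ | Real.cos θ ≠ 1}))
      simp only [Real.cos_zero, Complex.ofReal_one] at this
      refine this.congr fun θ => ?_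
      rw [hlam]
  · -- outer limit in k : L k → 1
    have hdc : (d:ℂ) ≠ 0 := by exact_mod_cast hd.ne'
    have ha : Tendsto (fun k : ℝ => (1 - Real.cos (k*d))/k) (nhdsWithin 0 {k : ℝ | k ≠ 0}) (nhds 0) := by
      have hder : HasDerivAt (fun k : ℝ => Real.cos (k*d)) (-Real.sin (0*d) * d) 0 :=
        by have := (Real.hasDerivAt_cos (0*d)).comp 0 (hasDerivAt_mul_const d); exact this
      have := hasDerivAt_iff_tendsto_slope.mp hder
      simp only [zero_mul, Real.sin_zero, neg_zero, zero_mul] at this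
      have hneg := this.neg
      rw [neg_zero] at hneg
      refine hneg.congr fun k => ?_
      simp [slope_def_field, Real.cos_zero]
      ring
    have hb : Tendsto (fun k : ℝ => Real.sin (k*d)/k) (nhdsWithin 0 {k : ℝ | k ≠ 0}) (nhds d) := by
      have hder : HasDerivAt (fun k : ℝ => Real.sin (k*d)) (Real.cos (0*d) * d) 0 :=
        by have := (Real.hasDerivAt_sin (0*d)).comp 0 (hasDerivAt_mul_const d); exact this
      have := hasDerivAt_iff_tendsto_slope.mp hder
      simp only [zero_mul, Real.cos_zero, one_mul] at this
      refine this.congr fun k => ?_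
      simp [slope_def_field, Real.sin_zero]
    -- complex versions
    have haC : Tendsto (fun k : ℝ => ((((1 - Real.cos (k*d))/k : ℝ)):ℂ))
        (nhdsWithin 0 {k : ℝ | k ≠ 0}) (nhds 0) := by
      exact (Complex.continuous_ofReal.tendsto 0).comp ha
    have hbC : Tendsto (fun k : ℝ => (((Real.sin (k*d)/k : ℝ)):ℂ))
        (nhdsWithin 0 {k : ℝ | k ≠ 0}) (nhds (d:ℂ)) := by
      exact (Complex.continuous_ofReal.tendsto d).comp hb
    have hDlim : ((t:ℂ) * 0 - c * (d:ℂ)) ≠ 0 := by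
      simpa using mul_ne_zero hcne hdc
    have hmain : Tendsto (fun k : ℝ =>
        -(((t:ℂ) * ((((1 - Real.cos (k*d))/k : ℝ)):ℂ) + c * (((Real.sin (k*d)/k : ℝ)):ℂ)) /
          ((t:ℂ) * ((((1 - Real.cos (k*d))/k : ℝ)):ℂ) - c * (((Real.sin (k*d)/k : ℝ)):ℂ))))
        (nhdsWithin 0 {k : ℝ | k ≠ 0})
        (nhds (-(((t:ℂ) * 0 + c * (d:ℂ)) / ((t:ℂ) * 0 - c * (d:ℂ))))) := by
      exact (((((tendsto_const_nhds.mul haC).add (tendsto_const_nhds.mul hbC)).div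
        ((tendsto_const_nhds.mul haC).sub (tendsto_const_nhds.mul hbC)) hDlim)).neg)
    have hone : -(((t:ℂ) * 0 + c * (d:ℂ)) / ((t:ℂ) * 0 - c * (d:ℂ))) = 1 := by
      rw [mul_zero, zero_add, zero_sub, div_neg, div_self (mul_ne_zero hcne hdc)]
      simp
    rw [hone] at hmain
    refine hmain.congr' ?_
    have hev : ∀ᶠ k : ℝ in nhdsWithin 0 {k : ℝ | k ≠ 0}, |k| < 2*Real.pi/d := by
      have hpos : (0:ℝ) < 2*Real.pi/d := by positivity
      have := (eventually_abs_sub_lt (0:ℝ) hpos).filter_mono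
        (nhdsWithin_le_nhds (s := {k : ℝ | k ≠ 0}))
      simpa using this
    filter_upwards [hev, eventually_mem_nhdsWithin] with k hklt hk0
    have hk0' : k ≠ 0 := hk0
    obtain ⟨h1, h2⟩ := abs_lt.mp hklt
    have hkd1 : -(2*Real.pi) < k*d := by
      have h := mul_lt_mul_of_pos_right h1 hd
      rwa [neg_mul, div_mul_cancel₀ _ hd.ne'] at h
    have hkd2 : k*d < 2*Real.pi := by
      have h := mul_lt_mul_of_pos_right h2 hd
      rwa [div_mul_cancel₀ _ hd.ne'] at h
    have hck : Real.cos (k*d) ≠ 1 := fun h =>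
      mul_ne_zero hk0' hd.ne' ((Real.cos_eq_one_iff_of_lt_of_lt hkd1 hkd2).mp h)
    rw [if_neg hck]
    have hkC : (k:ℂ) ≠ 0 := by exact_mod_cast hk0'
    push_cast [-Complex.ofReal_cos, -Complex.ofReal_sin]
    congr 1
    have e1 : (t:ℂ) * ((1 - (Real.cos (k*d):ℂ))/(k:ℂ)) + c * ((Real.sin (k*d):ℂ)/(k:ℂ))
        = ((t:ℂ) * (1 - (Real.cos (k*d):ℂ)) + c * (Real.sin (k*d):ℂ))/(k:ℂ) := by ring
    have e2 : (t:ℂ) * ((1 - (Real.cos (k*d):ℂ))/(k:ℂ)) - c * ((Real.sin (k*d):ℂ)/(k:ℂ))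
        = ((t:ℂ) * (1 - (Real.cos (k*d):ℂ)) - c * (Real.sin (k*d):ℂ))/(k:ℂ) := by ring
    rw [e1, e2, div_div_div_cancel_right₀ hkC]
  · -- inner limit in k for fixed θ with cos θ ≠ 1
    intro θ hθ
    have hx : t * (Real.cos θ - 1) ≠ 0 := mul_ne_zero ht0.ne' (sub_ne_zero.mpr hθ)
    have hD : (t:ℂ) * ((Real.cos θ:ℂ) - 1) - c * ((0:ℝ):ℂ) ≠ 0 := by
      have := hden (Real.cos θ - 1) 0 hx
      push_cast at this ⊢
      exact this
    have hcont : ContinuousAt (fun k : ℝ =>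
        -(((t:ℂ) * ((Real.cos θ:ℂ) - (Real.cos (k*d):ℂ)) + c * (Real.sin (k*d):ℂ)) /
          ((t:ℂ) * ((Real.cos θ:ℂ) - (Real.cos (k*d):ℂ)) - c * (Real.sin (k*d):ℂ)))) 0 := by
      apply ContinuousAt.neg
      apply ContinuousAt.div
      · fun_prop
      · fun_prop
      · simpa [Real.cos_zero, Real.sin_zero] using hD
    have hzC : (t:ℂ) * ((Real.cos θ:ℂ) - 1) ≠ 0 := by
      intro h; exact hx (by exact_mod_cast h)
    have hval : -(((t:ℂ) * ((Real.cos θ:ℂ) - (Real.cos ((0:ℝ)*d):ℂ)) + c * (Real.sin ((0:ℝ)*d):ℂ)) /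
          ((t:ℂ) * ((Real.cos θ:ℂ) - (Real.cos ((0:ℝ)*d):ℂ)) - c * (Real.sin ((0:ℝ)*d):ℂ))) = -1 := by
      simp only [zero_mul, Real.sin_zero, Real.cos_zero, Complex.ofReal_zero, mul_zero,
        Complex.ofReal_one, add_zero, sub_zero]
      rw [div_self hzC]
    have := hcont.tendsto.mono_left (nhdsWithin_le_nhds (s := {k : ℝ | k ≠ 0}))
    rw [hval] at this
    refine this.congr fun k => ?_
    rw [hlam]
  · -- discontinuity at the origin
    intro hcont
    have h00 : lam 0 0 = 0 := by
      rw [hlam]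
      simp
    have hmap : Tendsto (fun θ : ℝ => ((0:ℝ), θ)) (nhdsWithin 0 {θ : ℝ | θ ≠ 0}) (nhds ((0:ℝ), (0:ℝ))) :=
      ((continuous_const.prodMk continuous_id).tendsto (0:ℝ)).mono_left nhdsWithin_le_nhds
    have h2 : Tendsto (fun θ : ℝ => lam 0 θ) (nhdsWithin 0 {θ : ℝ | θ ≠ 0}) (nhds 0) := by
      have := (h00 ▸ hcont.tendsto).comp hmap
      exact this
    have hev : ∀ᶠ θ : ℝ in nhdsWithin 0 {θ : ℝ | θ ≠ 0}, lam 0 θ = -1 := by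
      have hevlt : ∀ᶠ θ : ℝ in nhdsWithin 0 {θ : ℝ | θ ≠ 0}, |θ| < 2*Real.pi := by
        have hpos : (0:ℝ) < 2*Real.pi := by positivity
        have := (eventually_abs_sub_lt (0:ℝ) hpos).filter_mono
          (nhdsWithin_le_nhds (s := {θ : ℝ | θ ≠ 0}))
        simpa using this
      filter_upwards [hevlt, eventually_mem_nhdsWithin] with θ hlt hθ0
      have hθ0' : θ ≠ 0 := hθ0
      rcases abs_lt.mp hlt with ⟨h1, h2⟩
      have : Real.cos θ ≠ 1 := fun h =>
        hθ0' ((Real.cos_eq_one_iff_of_lt_of_lt h1 h2).mp h)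
      exact hval0 θ this
    have h3 : Tendsto (fun _ : ℝ => (-1:ℂ)) (nhdsWithin 0 {θ : ℝ | θ ≠ 0}) (nhds 0) :=
      h2.congr' (by filter_upwards [hev] with θ h using h)
    have hne : (nhdsWithin (0:ℝ) {θ : ℝ | θ ≠ 0}).NeBot := by
      have h : {θ : ℝ | θ ≠ 0} = ({0}ᶜ : Set ℝ) := by ext x; simp
      rw [h]; infer_instance
    haveI := hne
    have := tendsto_nhds_unique h3 tendsto_const_nhds
    norm_num at this
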